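/- arXiv:2405.16696 — 2 statements merged into one kernel-verified Lean document; each statement's English description precedes it below -/
import Mathlib

section
/- For integers d ≥ 10 and 1 ≤ d' ≤ d/10, there exists a subset A of the binary vectors in {0,1}^d of Hamming weight exactly d' such that |A| ≥ sqrt(binomial(d, d')) and any two distinct elements of A have Hamming distance at least d'/5. -/
open Finset

lemma vg_pow_div_three_le_factorial (k : ℕ) : ((k : ℝ)/3)^k ≤ (k.factorial : ℝ) := by
  induction k with
  | zero => simp
  | succ k ih =>
    have e1 : (1 + 1/(k:ℝ))^k ≤ 3 := by
      rcases Nat.eq_zero_or_pos k with hk | hk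
      · subst hk; norm_num
      · have hkpos : (0:ℝ) < k := by exact_mod_cast hk
        have h1 : (1 + 1/(k:ℝ)) ≤ Real.exp (1/k) := by
          have := Real.add_one_le_exp (1/(k:ℝ)); linarith
        have h2 : (1 + 1/(k:ℝ))^k ≤ Real.exp (1/k) ^ k :=
          pow_le_pow_left₀ (by positivity) h1 k
        have h3 : Real.exp (1/(k:ℝ)) ^ k = Real.exp 1 := by
          rw [← Real.exp_nat_mul]; congr 1; field_simp
        have h4 : Real.exp 1 ≤ 3 := by
          have := Real.exp_one_lt_d9; linarith
        calc (1 + 1/(k:ℝ))^k ≤ Real.exp 1 := by rw [← h3]; exact h2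
          _ ≤ 3 := h4
    have h3 : ((k:ℝ)+1)^k ≤ 3 * (k:ℝ)^k := by
      rcases Nat.eq_zero_or_pos k with hk | hk
      · subst hk; norm_num
      · have hkpos : (0:ℝ) < k := by exact_mod_cast hk
        have key : ((k:ℝ)+1)^k = (1+1/(k:ℝ))^k * (k:ℝ)^k := by
          rw [← mul_pow]; congr 1; field_simp
        rw [key]
        have : (0:ℝ) ≤ (k:ℝ)^k := by positivity
        nlinarith [e1, this, pow_nonneg (by positivity : (0:ℝ) ≤ 1 + 1/(k:ℝ)) k]
    have hcast : (((k+1:ℕ)):ℝ) = (k:ℝ)+1 := by push_cast; ring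
    rw [hcast]
    calc (((k:ℝ)+1)/3)^(k+1)
        = ((k:ℝ)+1) * (((k:ℝ)+1)^k / 3^(k+1)) := by
          rw [div_pow, pow_succ]; ring
      _ ≤ ((k:ℝ)+1) * ((3*(k:ℝ)^k) / 3^(k+1)) := by
          gcongr
      _ = ((k:ℝ)+1) * ((k:ℝ)/3)^k := by
          rw [div_pow, pow_succ]; field_simp
      _ ≤ ((k:ℝ)+1) * (k.factorial:ℝ) := by
          gcongr
      _ = ((k+1).factorial : ℝ) := by rw [Nat.factorial_succ]; push_cast; ring

lemma vg_pow_div_le_choose : ∀ k n : ℕ, k ≤ n → ((n:ℝ)/k)^k ≤ (n.choose k : ℝ) := by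
  intro k
  induction k with
  | zero => intro n _; simp
  | succ k ih =>
    intro n hn
    obtain ⟨m, rfl⟩ : ∃ m, n = m + 1 := ⟨n - 1, by omega⟩
    have hkm : k ≤ m := by omega
    have hid : ((m+1).choose (k+1) : ℝ) = ((m:ℝ)+1) * (m.choose k : ℝ) / ((k:ℝ)+1) := by
      have := Nat.add_one_mul_choose_eq m k
      have hc : ((m+1) * m.choose k : ℝ) = ((m+1).choose (k+1) * (k+1) : ℝ) := by
        exact_mod_cast congrArg (Nat.cast : ℕ → ℝ) this
      push_cast at hc ⊢
      field_simp
      linarith [hc]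
    have step : (((m:ℝ)+1)/((k:ℝ)+1))^k ≤ ((m:ℝ)/k)^k := by
      rcases Nat.eq_zero_or_pos k with hk | hk
      · subst hk; norm_num
      · have hkpos : (0:ℝ) < k := by exact_mod_cast hk
        apply pow_le_pow_left₀ (by positivity)
        rw [div_le_div_iff₀ (by positivity) (by positivity)]
        have : (k:ℝ) ≤ m := by exact_mod_cast hkm
        nlinarith
    have ihm := ih m hkm
    have hpos : (0:ℝ) ≤ ((m:ℝ)+1)/((k:ℝ)+1) := by positivity
    calc (((m+1:ℕ):ℝ)/((k+1:ℕ):ℝ))^(k+1)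
        = (((m:ℝ)+1)/((k:ℝ)+1)) * (((m:ℝ)+1)/((k:ℝ)+1))^k := by
          push_cast; rw [pow_succ]; ring
      _ ≤ (((m:ℝ)+1)/((k:ℝ)+1)) * (m.choose k : ℝ) := by
          gcongr
          exact step.trans ihm
      _ = ((m+1).choose (k+1) : ℝ) := by rw [hid]; ring

lemma vg_sum_le_two_mul (f : ℕ → ℝ) (n : ℕ) (h0 : ∀ k, k ≤ n → 0 ≤ f k)
    (h : ∀ k, k < n → 2 * f k ≤ f (k+1)) :
    ∑ k ∈ range (n+1), f k ≤ 2 * f n := by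
  induction n with
  | zero => simp; linarith [h0 0 le_rfl]
  | succ n ih =>
    rw [Finset.sum_range_succ]
    have h1 : ∑ k ∈ range (n+1), f k ≤ 2 * f n :=
      ih (fun k hk => h0 k (by omega)) (fun k hk => h k (by omega))
    have h2 : 2 * f n ≤ f (n+1) := h n (by omega)
    linarith

lemma vg_card_S (d d' : ℕ) :
    ((univ : Finset (Fin d → Bool)).filter
      (fun w => (univ.filter fun i => w i = true).card = d')).card = d.choose d' := by
  rw [show d.choose d' = ((univ : Finset (Fin d)).powersetCard d').card by
    rw [Finset.card_powersetCard, card_univ, Fintype.card_fin]]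
  apply Finset.card_bij (fun w _ => univ.filter fun i => w i = true)
  · intro w hw
    simp only [mem_filter, mem_univ, true_and] at hw
    simp [Finset.mem_powersetCard, hw]
  · intro w hw w' hw' h
    funext i
    have : (i ∈ univ.filter fun j => w j = true) = (i ∈ univ.filter fun j => w' j = true) := by
      rw [h]
    simp only [mem_filter, mem_univ, true_and] at this
    cases hwi : w i <;> cases hwi' : w' i <;> simp_all
  · intro s hs
    simp only [Finset.mem_powersetCard] at hs
    refine ⟨fun i => decide (i ∈ s), ?_, ?_⟩
    · simp only [mem_filter, mem_univ, true_and]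
      rw [← hs.2]
      congr 1
      ext i
      simp
    · ext i
      simp

lemma vg_ball_card_le (d d' t : ℕ) (w : Fin d → Bool)
    (hw : (univ.filter fun i => w i = true).card = d') :
    ((univ : Finset (Fin d → Bool)).filter
      (fun u => (univ.filter fun i => u i = true).card = d' ∧
        hammingDist u w < 2*t + 2)).card
      ≤ ∑ k ∈ range (t+1), d'.choose k * (d - d').choose k := by
  classical
  set s : Finset (Fin d) := univ.filter fun i => w i = true with hs
  have hscard : s.card = d' := hw
  have hsccard : sᶜ.card = d - d' := by
    rw [Finset.card_compl, hscard, Fintype.card_fin]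
  set T : Finset ((_ : ℕ) × (Finset (Fin d) × Finset (Fin d))) :=
    (range (t+1)).sigma (fun k => (s.powersetCard k) ×ˢ (sᶜ.powersetCard k)) with hT
  have hTcard : T.card = ∑ k ∈ range (t+1), d'.choose k * (d - d').choose k := by
    rw [hT, Finset.card_sigma]
    apply Finset.sum_congr rfl
    intro k _
    rw [Finset.card_product, Finset.card_powersetCard, Finset.card_powersetCard,
      hscard, hsccard]
  rw [← hTcard]
  apply Finset.card_le_card_of_injOn
    (fun u => ⟨(s \ (univ.filter fun i => u i = true)).card,
      (s \ (univ.filter fun i => u i = true), (univ.filter fun i => u i = true) \ s)⟩)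
  · intro u hu
    simp only [mem_coe, mem_filter, mem_univ, true_and] at hu
    obtain ⟨hu1, hu2⟩ := hu
    set su : Finset (Fin d) := univ.filter fun i => u i = true with hsu
    have key1 : (s \ su).card = (su \ s).card := by
      have e1 := Finset.card_sdiff_add_card_inter s su
      have e2 := Finset.card_sdiff_add_card_inter su s
      rw [Finset.inter_comm] at e2
      omega
    have key2 : hammingDist u w = (s \ su).card + (su \ s).card := by
      have hset : ({i | u i ≠ w i} : Finset (Fin d)) = (s \ su) ∪ (su \ s) := by
        ext i
        simp only [Finset.mem_filter, Finset.mem_univ, true_and, Finset.mem_union,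
          Finset.mem_sdiff, hs, hsu]
        cases hui : u i <;> cases hwi : w i <;> simp
      rw [hammingDist, hset, Finset.card_union_of_disjoint disjoint_sdiff_sdiff]
    have hk : (s \ su).card ≤ t := by omega
    rw [Finset.mem_coe, hT, Finset.mem_sigma, Finset.mem_range, Finset.mem_product,
      Finset.mem_powersetCard, Finset.mem_powersetCard]
    refine ⟨show (s \ su).card < t + 1 by omega, ⟨Finset.sdiff_subset, rfl⟩,
      ⟨fun i hi => ?_, key1.symm⟩⟩
    simp only [Finset.mem_compl]
    exact fun hcon => (Finset.mem_sdiff.mp hi).2 hcon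
  · intro u hu u' hu' heq
    set su : Finset (Fin d) := univ.filter fun i => u i = true with hsu
    set su' : Finset (Fin d) := univ.filter fun i => u' i = true with hsu'
    have hP : s \ su = s \ su' := congrArg (fun x => x.2.1) heq
    have hQ : su \ s = su' \ s := congrArg (fun x => x.2.2) heq
    have hsue : su = su' := by
      have e1 : su = su \ s ∪ (s \ (s \ su)) := by
        rw [Finset.sdiff_sdiff_self_left, Finset.inter_comm s su,
          Finset.sdiff_union_inter]
      have e2 : su' = su' \ s ∪ (s \ (s \ su')) := by
        rw [Finset.sdiff_sdiff_self_left, Finset.inter_comm s su',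
          Finset.sdiff_union_inter]
      calc su = su \ s ∪ (s \ (s \ su)) := e1
        _ = su' \ s ∪ (s \ (s \ su')) := by rw [hP, hQ]
        _ = su' := e2.symm
    funext i
    have : (i ∈ su) = (i ∈ su') := by rw [hsue]
    simp only [hsu, hsu', mem_filter, mem_univ, true_and] at this
    cases h1 : u i <;> cases h2 : u' i <;> simp_all
lemma vg_numeric (d d' : ℕ) (hd'1 : 1 ≤ d') (hd' : 10 * d' ≤ d) :
    (∑ k ∈ range ((d'-1)/10 + 1), ((d'.choose k * (d - d').choose k : ℕ) : ℝ))
      ≤ Real.sqrt (d.choose d') := by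
  set t : ℕ := (d'-1)/10 with ht
  have ht1 : 10 * t + 1 ≤ d' := by omega
  have ht2 : d' ≤ 10 * t + 10 := by omega
  have hd'd : d' ≤ d := by omega
  have hD'pos : (0:ℝ) < (d':ℝ) := by exact_mod_cast hd'1
  have hDpos : (0:ℝ) < (d:ℝ) := by
    have : (0:ℕ) < d := by omega
    exact_mod_cast this
  have h10 : (10:ℝ) * (d':ℝ) ≤ (d:ℝ) := by exact_mod_cast hd'
  have h1dd : (1:ℝ) ≤ (d:ℝ)/(d':ℝ) := by
    rw [le_div_iff₀ hD'pos]; nlinarith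
  -- the comparison sequence
  set b : ℕ → ℝ := fun k => (d':ℝ)^k * (d:ℝ)^k / ((k.factorial:ℝ))^2 with hb
  have hbpos : ∀ k, 0 < b k := by
    intro k
    have hf : (0:ℝ) < (k.factorial:ℝ) := by exact_mod_cast k.factorial_pos
    positivity
  -- Step A : termwise bound
  have hA : ∀ k, ((d'.choose k * (d - d').choose k : ℕ) : ℝ) ≤ b k := by
    intro k
    have hf : (0:ℝ) < (k.factorial:ℝ) := by exact_mod_cast k.factorial_pos
    have h1 : ((d'.choose k : ℕ) : ℝ) ≤ (d':ℝ)^k / (k.factorial:ℝ) := by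
      have := Nat.choose_le_pow_div (α := ℝ) k d'
      push_cast at this ⊢
      convert this using 2
    have h2 : (((d - d').choose k : ℕ) : ℝ) ≤ (d:ℝ)^k / (k.factorial:ℝ) := by
      have h2a := Nat.choose_le_pow_div (α := ℝ) k (d - d')
      have h2b : ((d - d' : ℕ):ℝ)^k ≤ (d:ℝ)^k := by
        apply pow_le_pow_left₀ (by positivity)
        exact_mod_cast Nat.sub_le d d'
      push_cast at h2a ⊢
      calc (((d - d').choose k : ℕ) : ℝ) ≤ ((d - d' : ℕ):ℝ)^k / (k.factorial:ℝ) := by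
            push_cast at h2a ⊢; exact h2a
        _ ≤ (d:ℝ)^k / (k.factorial:ℝ) := by gcongr
    calc ((d'.choose k * (d - d').choose k : ℕ) : ℝ)
        = ((d'.choose k : ℕ):ℝ) * (((d - d').choose k : ℕ):ℝ) := by push_cast; ring
      _ ≤ ((d':ℝ)^k / (k.factorial:ℝ)) * ((d:ℝ)^k / (k.factorial:ℝ)) := by
          apply mul_le_mul h1 h2 (by positivity) (by positivity)
      _ = b k := by rw [hb]; field_simp
  -- Step B : sum is at most 2 * b t
  have hB : ∑ k ∈ range (t+1), ((d'.choose k * (d - d').choose k : ℕ) : ℝ) ≤ 2 * b t := by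
    calc ∑ k ∈ range (t+1), ((d'.choose k * (d - d').choose k : ℕ) : ℝ)
        ≤ ∑ k ∈ range (t+1), b k := Finset.sum_le_sum (fun k _ => hA k)
      _ ≤ 2 * b t := by
          apply vg_sum_le_two_mul b t (fun k _ => (hbpos k).le)
          intro k hk
          have hfs : ((k+1).factorial : ℝ) = ((k:ℝ)+1) * (k.factorial:ℝ) := by
            rw [Nat.factorial_succ]; push_cast; ring
          have hfp : (0:ℝ) < (k.factorial:ℝ) := by exact_mod_cast k.factorial_pos
          have hstep : b (k+1) = b k * ((d':ℝ) * (d:ℝ) / ((k:ℝ)+1)^2) := by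
            rw [hb]; simp only []
            rw [hfs, pow_succ (d':ℝ), pow_succ (d:ℝ)]
            field_simp
          have hk1 : k + 1 ≤ d' := by omega
          have hquad : 2 * ((k:ℝ)+1)^2 ≤ (d':ℝ) * (d:ℝ) := by
            have hkr : ((k:ℝ)+1) ≤ (d':ℝ) := by exact_mod_cast hk1
            nlinarith
          have h2le : (2:ℝ) ≤ (d':ℝ) * (d:ℝ) / ((k:ℝ)+1)^2 := by
            rw [le_div_iff₀ (by positivity)]
            nlinarith
          calc 2 * b k ≤ b k * ((d':ℝ) * (d:ℝ) / ((k:ℝ)+1)^2) := by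
                rw [mul_comm]
                exact mul_le_mul_of_nonneg_left h2le (hbpos k).le
            _ = b (k+1) := hstep.symm
  -- Step C : 2 * b t ≤ sqrt choose
  have hC : 2 * b t ≤ Real.sqrt (d.choose d') := by
    apply Real.le_sqrt_of_sq_le
    have hchoose : ((d:ℝ)/(d':ℝ))^(d') ≤ (d.choose d' : ℝ) := vg_pow_div_le_choose d' d hd'd
    refine le_trans ?_ hchoose
    rcases Nat.eq_zero_or_pos t with ht0 | htpos
    · -- t = 0 : (2 * b 0)^2 = 4 ≤ (d/d')^d'
      rw [ht0]
      have hb0 : b 0 = 1 := by rw [hb]; norm_num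
      rw [hb0]
      have h10' : (10:ℝ) ≤ (d:ℝ)/(d':ℝ) := by
        rw [le_div_iff₀ hD'pos]; nlinarith
      calc (2 * (1:ℝ))^2 = 4 := by norm_num
        _ ≤ 10^1 := by norm_num
        _ ≤ (10:ℝ)^(d') := by
            apply pow_le_pow_right₀ (by norm_num) hd'1
        _ ≤ ((d:ℝ)/(d':ℝ))^(d') := by
            apply pow_le_pow_left₀ (by norm_num) h10'
    · -- t ≥ 1
      have hT1 : (1:ℝ) ≤ (t:ℝ) := by exact_mod_cast htpos
      have hTpos : (0:ℝ) < (t:ℝ) := by linarith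
      have hF : ((t:ℝ)/3)^t ≤ (t.factorial:ℝ) := vg_pow_div_three_le_factorial t
      have hFpos : (0:ℝ) < (t.factorial:ℝ) := by exact_mod_cast t.factorial_pos
      have h20 : (d':ℝ) ≤ 20 * (t:ℝ) := by
        have : d' ≤ 20 * t := by omega
        exact_mod_cast this
      -- numeric core : 4 * 81^t * 20^(4t) ≤ 10^(8t+1)
      have hnum : (4:ℝ) * 81^t * 20^(4*t) ≤ 10^(8*t+1) := by
        have e1 : (4:ℝ) * 81^t * 20^(4*t) = 4 * (81 * 160000)^t := by
          rw [pow_mul, mul_pow]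
          norm_num
          ring
        have e2 : (10:ℝ)^(8*t+1) = 10 * (100000000)^t := by
          rw [pow_succ, pow_mul]
          norm_num
          ring
        rw [e1, e2]
        have : ((81 * 160000 : ℝ))^t ≤ ((100000000 : ℝ))^t := by
          apply pow_le_pow_left₀ (by norm_num) (by norm_num)
        nlinarith [pow_nonneg (by norm_num : (0:ℝ) ≤ (81 * 160000:ℝ)) t]
      -- POLY : 4 * 81^t * d'^(2t) * d'^(10t+1) ≤ d^(8t+1) * t^(4t)
      have hP1 : (d':ℝ)^(4*t) ≤ 20^(4*t) * (t:ℝ)^(4*t) := by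
        calc (d':ℝ)^(4*t) ≤ (20 * (t:ℝ))^(4*t) := by
              apply pow_le_pow_left₀ hD'pos.le h20
          _ = 20^(4*t) * (t:ℝ)^(4*t) := mul_pow _ _ _
      have hD8 : (10:ℝ)^(8*t+1) * (d':ℝ)^(8*t+1) ≤ (d:ℝ)^(8*t+1) := by
        calc (10:ℝ)^(8*t+1) * (d':ℝ)^(8*t+1) = ((10:ℝ) * (d':ℝ))^(8*t+1) :=
              (mul_pow _ _ _).symm
          _ ≤ (d:ℝ)^(8*t+1) := by
              apply pow_le_pow_left₀ (by positivity) h10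
      have hPOLY : 4 * 81^t * ((d':ℝ)^(2*t) * (d':ℝ)^(10*t+1)) ≤
          (d:ℝ)^(8*t+1) * (t:ℝ)^(4*t) := by
        have e3 : (d':ℝ)^(2*t) * (d':ℝ)^(10*t+1) = (d':ℝ)^(4*t) * (d':ℝ)^(8*t+1) := by
          rw [← pow_add, ← pow_add]
          congr 1
          ring
        rw [e3]
        calc 4 * 81^t * ((d':ℝ)^(4*t) * (d':ℝ)^(8*t+1))
            ≤ 4 * 81^t * ((20^(4*t) * (t:ℝ)^(4*t)) * (d':ℝ)^(8*t+1)) := by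
              gcongr
          _ = (4 * 81^t * 20^(4*t)) * (d':ℝ)^(8*t+1) * (t:ℝ)^(4*t) := by ring
          _ ≤ 10^(8*t+1) * (d':ℝ)^(8*t+1) * (t:ℝ)^(4*t) := by
              gcongr
          _ ≤ (d:ℝ)^(8*t+1) * (t:ℝ)^(4*t) := by
              gcongr
      -- KEY : 4 * d'^(2t) * d^(2t) * 81^t ≤ (d/d')^d' * t^(4t)
      have hKEY : 4 * (d':ℝ)^(2*t) * (d:ℝ)^(2*t) * 81^t ≤
          ((d:ℝ)/(d':ℝ))^(d') * (t:ℝ)^(4*t) := by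
        have hmono : ((d:ℝ)/(d':ℝ))^(10*t+1) ≤ ((d:ℝ)/(d':ℝ))^(d') :=
          pow_le_pow_right₀ h1dd ht1
        refine le_trans ?_
          (mul_le_mul_of_nonneg_right hmono (by positivity : (0:ℝ) ≤ (t:ℝ)^(4*t)))
        rw [div_pow, div_mul_eq_mul_div, le_div_iff₀ (by positivity)]
        have e4 : (d:ℝ)^(10*t+1) = (d:ℝ)^(2*t) * (d:ℝ)^(8*t+1) := by
          rw [← pow_add]; congr 1; ring
        calc 4 * (d':ℝ)^(2*t) * (d:ℝ)^(2*t) * 81^t * (d':ℝ)^(10*t+1)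
            = (4 * 81^t * ((d':ℝ)^(2*t) * (d':ℝ)^(10*t+1))) * (d:ℝ)^(2*t) := by ring
          _ ≤ ((d:ℝ)^(8*t+1) * (t:ℝ)^(4*t)) * (d:ℝ)^(2*t) := by
              gcongr
          _ = (d:ℝ)^(10*t+1) * (t:ℝ)^(4*t) := by rw [e4]; ring
      -- conclude
      have hFt : (t:ℝ)^(4*t) / 81^t ≤ ((t.factorial:ℝ))^2 * ((t.factorial:ℝ))^2 := by
        have h1 : ((t:ℝ)/3)^(4*t) ≤ ((t.factorial:ℝ))^2 * ((t.factorial:ℝ))^2 := by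
          have := pow_le_pow_left₀ (by positivity : (0:ℝ) ≤ ((t:ℝ)/3)^t) hF 4
          calc ((t:ℝ)/3)^(4*t) = (((t:ℝ)/3)^t)^4 := by rw [← pow_mul, mul_comm]
            _ ≤ ((t.factorial:ℝ))^4 := this
            _ = ((t.factorial:ℝ))^2 * ((t.factorial:ℝ))^2 := by ring
        have h81 : (81:ℝ)^t = 3^(4*t) := by
          rw [pow_mul]; norm_num
        calc (t:ℝ)^(4*t) / 81^t = (t:ℝ)^(4*t) / 3^(4*t) := by rw [h81]
          _ = ((t:ℝ)/3)^(4*t) := (div_pow _ _ _).symm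
          _ ≤ _ := h1
      -- (2 * b t)^2 ≤ (d/d')^d'
      have hbt : (2 * b t)^2 = 4 * (d':ℝ)^(2*t) * (d:ℝ)^(2*t) /
          (((t.factorial:ℝ))^2 * ((t.factorial:ℝ))^2) := by
        rw [hb]
        simp only []
        rw [mul_comm 2 t, pow_mul, pow_mul]
        field_simp
        ring
      rw [hbt, div_le_iff₀ (by positivity)]
      calc 4 * (d':ℝ)^(2*t) * (d:ℝ)^(2*t)
          = (4 * (d':ℝ)^(2*t) * (d:ℝ)^(2*t) * 81^t) / 81^t := by
            field_simp
        _ ≤ (((d:ℝ)/(d':ℝ))^(d') * (t:ℝ)^(4*t)) / 81^t := by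
            gcongr
        _ = ((d:ℝ)/(d':ℝ))^(d') * ((t:ℝ)^(4*t) / 81^t) := by ring
        _ ≤ ((d:ℝ)/(d':ℝ))^(d') * (((t.factorial:ℝ))^2 * ((t.factorial:ℝ))^2) := by
            gcongr
  exact hB.trans hC

/-- Varshamov–Gilbert-type packing lemma for constant-weight binary codes:
for `d ≥ 10` and `1 ≤ d' ≤ d/10`, there is a set `A` of binary vectors of Hamming
weight exactly `d'`, of cardinality at least `√(C(d, d'))`, whose distinct elements
are pairwise at Hamming distance at least `d'/5`. -/
theorem exists_constant_weight_code (d d' : ℕ) (hd : 10 ≤ d) (hd'1 : 1 ≤ d')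
    (hd' : 10 * d' ≤ d) :
    ∃ A : Finset (Fin d → Bool),
      (∀ w ∈ A, (Finset.univ.filter fun i => w i = true).card = d') ∧
      Real.sqrt (Nat.choose d d') ≤ A.card ∧
      ∀ w ∈ A, ∀ w' ∈ A, w ≠ w' → (d' : ℝ) / 5 ≤ hammingDist w w' := by
  classical
  have hd'd : d' ≤ d := by omega
  set S : Finset (Fin d → Bool) :=
    univ.filter (fun w => (univ.filter fun i => w i = true).card = d') with hS
  have hScard : S.card = d.choose d' := vg_card_S d d'
  set t : ℕ := (d'-1)/10 with ht
  set good : Finset (Fin d → Bool) → Prop := fun A => A ⊆ S ∧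
    ∀ w ∈ A, ∀ w' ∈ A, w ≠ w' → (d' : ℝ) / 5 ≤ hammingDist w w' with hgood
  have hne : ((univ : Finset (Finset (Fin d → Bool))).filter good).Nonempty := by
    refine ⟨∅, ?_⟩
    simp [hgood]
  obtain ⟨A, hAmem, hAmax⟩ := Finset.exists_max_image _ Finset.card hne
  rw [Finset.mem_filter] at hAmem
  obtain ⟨hAS, hApair⟩ := hAmem.2
  -- covering property by maximality
  have hcover : S ⊆ A.biUnion (fun w => S.filter (fun u => hammingDist u w < 2*t+2)) := by
    intro u huS
    by_contra hcon
    simp only [Finset.mem_biUnion, not_exists] at hcon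
    have hfar : ∀ w ∈ A, (d' : ℝ)/5 ≤ hammingDist u w := by
      intro w hw
      by_contra hlt
      push_neg at hlt
      have h5 : 5 * hammingDist u w < d' := by
        have h5r : (5:ℝ) * (hammingDist u w : ℝ) < (d' : ℝ) := by linarith
        exact_mod_cast h5r
      have hlt2 : hammingDist u w < 2*t+2 := by omega
      exact hcon w ⟨hw, Finset.mem_filter.mpr ⟨huS, hlt2⟩⟩
    have huA : u ∉ A := by
      intro h
      have h0 := hfar u h
      rw [hammingDist_self] at h0
      have : (0:ℝ) < (d' : ℝ)/5 := by
        have : (0:ℝ) < (d':ℝ) := by exact_mod_cast hd'1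
        linarith
      simp at h0
      linarith
    have hgoodins : good (insert u A) := by
      constructor
      · exact Finset.insert_subset huS hAS
      · intro x hx y hy hxy
        rcases Finset.mem_insert.mp hx with hxu | hxA
        · rcases Finset.mem_insert.mp hy with hyu | hyA
          · exact absurd (hxu.trans hyu.symm) hxy
          · subst hxu; exact hfar y hyA
        · rcases Finset.mem_insert.mp hy with hyu | hyA
          · subst hyu; rw [hammingDist_comm]; exact hfar x hxA
          · exact hApair x hxA y hyA hxy
    have hlec := hAmax (insert u A)
      (Finset.mem_filter.mpr ⟨Finset.mem_univ _, hgoodins⟩)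
    rw [Finset.card_insert_of_notMem huA] at hlec
    omega
  -- counting
  have hball : ∀ w ∈ A, (S.filter (fun u => hammingDist u w < 2*t+2)).card ≤
      ∑ k ∈ range (t+1), d'.choose k * (d - d').choose k := by
          intro w hw
          have hwt : (univ.filter fun i => w i = true).card = d' := by
            have hmem := hAS hw
            rw [hS, Finset.mem_filter] at hmem
            exact hmem.2
          have heq : S.filter (fun u => hammingDist u w < 2*t+2) =
              (univ : Finset (Fin d → Bool)).filter
                (fun u => (univ.filter fun i => u i = true).card = d' ∧
                  hammingDist u w < 2*t+2) := by
            rw [hS, Finset.filter_filter]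
          rw [heq]
          exact vg_ball_card_le d d' t w hwt
  have hcount : S.card ≤ A.card * ∑ k ∈ range (t+1), d'.choose k * (d - d').choose k := by
    calc S.card ≤ (A.biUnion (fun w => S.filter (fun u => hammingDist u w < 2*t+2))).card :=
          Finset.card_le_card hcover
      _ ≤ ∑ w ∈ A, (S.filter (fun u => hammingDist u w < 2*t+2)).card :=
          Finset.card_biUnion_le
      _ ≤ A.card • (∑ k ∈ range (t+1), d'.choose k * (d - d').choose k) :=
          Finset.sum_le_card_nsmul _ _ _ hball
      _ = A.card * ∑ k ∈ range (t+1), d'.choose k * (d - d').choose k := smul_eq_mul ..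
  refine ⟨A, ?_, ?_, hApair⟩
  · intro w hw
    have hmem := hAS hw
    rw [hS, Finset.mem_filter] at hmem
    exact hmem.2
  · have hnum := vg_numeric d d' hd'1 hd'
    have hcpos : (0:ℝ) < (d.choose d' : ℝ) := by
      exact_mod_cast Nat.choose_pos hd'd
    have hs : (0:ℝ) < Real.sqrt (d.choose d') := Real.sqrt_pos.mpr hcpos
    have hch : ((d.choose d' : ℕ) : ℝ) ≤ (A.card : ℝ) * Real.sqrt (d.choose d') := by
      calc ((d.choose d' : ℕ) : ℝ) = (S.card : ℝ) := by rw [hScard]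
        _ ≤ (A.card : ℝ) * ∑ k ∈ range (t+1), ((d'.choose k * (d - d').choose k : ℕ) : ℝ) := by
            push_cast
            exact_mod_cast hcount
        _ ≤ (A.card : ℝ) * Real.sqrt (d.choose d') := by
            apply mul_le_mul_of_nonneg_left _ (by positivity)
            exact hnum
    have hsq : Real.sqrt (d.choose d') * Real.sqrt (d.choose d') ≤
        (A.card : ℝ) * Real.sqrt (d.choose d') := by
      rw [Real.mul_self_sqrt hcpos.le]
      exact hch
    exact le_of_mul_le_mul_right hsq hs
end

section
/- Global and local metric entropies satisfy M(δ/2) − M(δ) ≤ M^loc(δ) ≤ M(δ/2), where M(δ) is the log of the maximal δ-packing number of a totally bounded metric space S, and M^loc(δ) is the maximal over θ ∈ S of the log of the largest (δ/2)-packing of the ball B(θ, δ). -/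
open Metric

/-- The maximal cardinality of a `δ`-packing of the set `B`: the largest size of a
finite subset of `B` whose points are pairwise at distance at least `δ`. -/
noncomputable def packNum {S : Type*} [PseudoMetricSpace S] (B : Set S) (δ : ℝ) : ℕ :=
  sSup {n | ∃ P : Finset S, ↑P ⊆ B ∧
    (∀ x ∈ P, ∀ y ∈ P, x ≠ y → δ ≤ dist x y) ∧ P.card = n}

def packSet {S : Type*} [PseudoMetricSpace S] (B : Set S) (δ : ℝ) : Set ℕ :=
  {n | ∃ P : Finset S, ↑P ⊆ B ∧
    (∀ x ∈ P, ∀ y ∈ P, x ≠ y → δ ≤ dist x y) ∧ P.card = n}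

lemma packSet_nonempty {S : Type*} [PseudoMetricSpace S] (B : Set S) (δ : ℝ) :
    (packSet B δ).Nonempty :=
  ⟨0, ∅, by simp⟩

lemma packSet_bddAbove {S : Type*} [PseudoMetricSpace S]
    (htb : TotallyBounded (Set.univ : Set S)) (B : Set S) {δ : ℝ} (hδ : 0 < δ) :
    BddAbove (packSet B δ) := by
  classical
  obtain ⟨t, htf, hcov⟩ := (Metric.totallyBounded_iff.mp htb) (δ/2) (by linarith)
  refine ⟨htf.toFinset.card, ?_⟩
  rintro n ⟨P, _, hP, rfl⟩
  set f : S → S := fun x =>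
    if h : ∃ y ∈ htf.toFinset, x ∈ ball y (δ/2) then h.choose else x with hf
  have hmem : ∀ x : S, ∃ y ∈ htf.toFinset, x ∈ ball y (δ/2) := by
    intro x
    have := hcov (Set.mem_univ x)
    simp only [Set.mem_iUnion, exists_prop] at this
    obtain ⟨y, hy, hxy⟩ := this
    exact ⟨y, htf.mem_toFinset.mpr hy, hxy⟩
  have hfspec : ∀ x : S, f x ∈ htf.toFinset ∧ x ∈ ball (f x) (δ/2) := by
    intro x
    simp only [hf, dif_pos (hmem x)]
    exact ⟨(hmem x).choose_spec.1, (hmem x).choose_spec.2⟩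
  apply Finset.card_le_card_of_injOn f (fun x _ => (hfspec x).1)
  intro x hx y hy hxy
  by_contra hne
  have h1 := (hfspec x).2
  have h2 := (hfspec y).2
  rw [hxy] at h1
  have := hP x (by simpa using hx) y (by simpa using hy) hne
  have hd : dist x y < δ := by
    calc dist x y ≤ dist x (f y) + dist y (f y) := dist_triangle_right x y (f y)
    _ < δ/2 + δ/2 := add_lt_add (mem_ball.mp h1) (mem_ball.mp h2)
    _ = δ := by ring
  linarith

lemma packNum_mem {S : Type*} [PseudoMetricSpace S]
    (htb : TotallyBounded (Set.univ : Set S)) (B : Set S) {δ : ℝ} (hδ : 0 < δ) :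
    packNum B δ ∈ packSet B δ :=
  Nat.sSup_mem (packSet_nonempty B δ) (packSet_bddAbove htb B hδ)

lemma le_packNum {S : Type*} [PseudoMetricSpace S]
    (htb : TotallyBounded (Set.univ : Set S)) (B : Set S) {δ : ℝ} (hδ : 0 < δ)
    {n : ℕ} (hn : n ∈ packSet B δ) : n ≤ packNum B δ :=
  le_csSup (packSet_bddAbove htb B hδ) hn

lemma packNum_mono {S : Type*} [PseudoMetricSpace S]
    (htb : TotallyBounded (Set.univ : Set S)) {B B' : Set S} (hBB : B ⊆ B') {δ : ℝ}
    (hδ : 0 < δ) : packNum B δ ≤ packNum B' δ := by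
  obtain ⟨P, hPB, hP, hcard⟩ := packNum_mem htb B hδ
  exact hcard ▸ le_packNum htb B' hδ ⟨P, hPB.trans hBB, hP, rfl⟩

lemma one_le_packNum {S : Type*} [PseudoMetricSpace S]
    (htb : TotallyBounded (Set.univ : Set S)) {B : Set S} (hB : B.Nonempty) {δ : ℝ}
    (hδ : 0 < δ) : 1 ≤ packNum B δ := by
  obtain ⟨x, hx⟩ := hB
  exact le_packNum htb B hδ ⟨{x}, by simpa using hx, by simp, by simp⟩

lemma packNum_counting {S : Type*} [PseudoMetricSpace S] [Nonempty S]
    (htb : TotallyBounded (Set.univ : Set S)) {δ : ℝ} (hδ : 0 < δ) :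
    ∃ p0 : S, packNum (Set.univ : Set S) (δ/2) ≤
      packNum (Set.univ : Set S) δ * packNum (closedBall p0 δ) (δ/2) := by
  classical
  obtain ⟨P, -, hP, hPcard⟩ := packNum_mem htb Set.univ hδ
  obtain ⟨Q, -, hQ, hQcard⟩ := packNum_mem htb Set.univ (by linarith : (0:ℝ) < δ/2)
  have hPne : P.Nonempty := by
    rw [← Finset.card_pos, hPcard]
    exact one_le_packNum htb ⟨Classical.arbitrary S, Set.mem_univ _⟩ hδ
  -- every point is within δ of some point of P
  have hnear : ∀ q : S, ∃ p ∈ P, dist q p ≤ δ := by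
    intro q
    by_contra h
    push_neg at h
    have hqP : q ∉ P := fun hq => absurd (h q hq) (by simp [hδ.le, dist_self])
    have : (insert q P).card ∈ packSet (Set.univ : Set S) δ := by
      refine ⟨insert q P, by simp, ?_, rfl⟩
      intro x hx y hy hxy
      rcases Finset.mem_insert.mp hx with hx' | hx' <;>
        rcases Finset.mem_insert.mp hy with hy' | hy'
      · exact absurd (hx'.trans hy'.symm) hxy
      · subst hx'; exact (h y hy').le
      · subst hy'; rw [dist_comm]; exact (h x hx').le
      · exact hP x hx' y hy' hxy
    have hle := le_packNum htb Set.univ hδ this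
    rw [Finset.card_insert_of_notMem hqP, hPcard] at hle
    omega
  set f : S → S := fun q => (hnear q).choose with hf
  have hfP : ∀ q : S, f q ∈ P := fun q => (hnear q).choose_spec.1
  have hfd : ∀ q : S, dist q (f q) ≤ δ := fun q => (hnear q).choose_spec.2
  have hsum : Q.card = ∑ p ∈ P, (Q.filter fun q => f q = p).card :=
    Finset.card_eq_sum_card_fiberwise (fun q _ => hfP q)
  -- choose p0 maximizing the local packing number over P
  obtain ⟨p0, -, hp0⟩ := P.exists_max_image (fun p => packNum (closedBall p δ) (δ/2)) hPne
  have hfib : ∀ p ∈ P, (Q.filter fun q => f q = p).card ≤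
      packNum (closedBall p0 δ) (δ/2) := by
    intro p hp
    refine le_trans (le_packNum htb _ (by linarith : (0:ℝ) < δ/2) ?_) (hp0 p hp)
    refine ⟨Q.filter fun q => f q = p, ?_, ?_, rfl⟩
    · intro q hq
      simp only [Finset.coe_filter, Set.mem_setOf_eq] at hq
      exact mem_closedBall.mpr (hq.2 ▸ hfd q)
    · intro x hx y hy hxy
      exact hQ x (Finset.mem_of_mem_filter x hx) y (Finset.mem_of_mem_filter y hy) hxy
  refine ⟨p0, ?_⟩
  calc packNum (Set.univ : Set S) (δ/2) = Q.card := hQcard.symm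
    _ = ∑ p ∈ P, (Q.filter fun q => f q = p).card := hsum
    _ ≤ ∑ _p ∈ P, packNum (closedBall p0 δ) (δ/2) := Finset.sum_le_sum hfib
    _ = P.card * packNum (closedBall p0 δ) (δ/2) := by
        rw [Finset.sum_const, smul_eq_mul]
    _ = _ := by rw [hPcard]


/-- Relationship between global and local metric entropies. -/
theorem global_local_entropy {S : Type*} [PseudoMetricSpace S] [Nonempty S]
    (htb : TotallyBounded (Set.univ : Set S)) (δ : ℝ) (hδ : 0 < δ) :
    Real.log (packNum (Set.univ : Set S) (δ / 2)) - Real.log (packNum (Set.univ : Set S) δ)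
        ≤ ⨆ θ : S, Real.log (packNum (closedBall θ δ) (δ / 2)) ∧
    (⨆ θ : S, Real.log (packNum (closedBall θ δ) (δ / 2)))
        ≤ Real.log (packNum (Set.univ : Set S) (δ / 2)) := by
  have hδ2 : (0:ℝ) < δ / 2 := by linarith
  set M := packNum (Set.univ : Set S) (δ/2) with hMdef
  set N := packNum (Set.univ : Set S) δ with hNdef
  have hM1 : 1 ≤ M := one_le_packNum htb ⟨Classical.arbitrary S, Set.mem_univ _⟩ hδ2
  have hN1 : 1 ≤ N := one_le_packNum htb ⟨Classical.arbitrary S, Set.mem_univ _⟩ hδ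
  have hθ1 : ∀ θ : S, 1 ≤ packNum (closedBall θ δ) (δ/2) := fun θ =>
    one_le_packNum htb ⟨θ, mem_closedBall_self hδ.le⟩ hδ2
  have hθM : ∀ θ : S, packNum (closedBall θ δ) (δ/2) ≤ M := fun θ =>
    packNum_mono htb (Set.subset_univ _) hδ2
  have hbdd : BddAbove (Set.range fun θ : S =>
      Real.log (packNum (closedBall θ δ) (δ/2))) := by
    refine ⟨Real.log M, ?_⟩
    rintro _ ⟨θ, rfl⟩
    exact Real.log_le_log (by exact_mod_cast hθ1 θ) (by exact_mod_cast hθM θ)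
  constructor
  · obtain ⟨p0, hcount⟩ := packNum_counting htb hδ
    have hlog : Real.log M ≤ Real.log N +
        Real.log (packNum (closedBall p0 δ) (δ/2)) := by
      have h1 : Real.log M ≤ Real.log ((N : ℝ) *
          (packNum (closedBall p0 δ) (δ/2) : ℝ)) := by
        refine Real.log_le_log (by exact_mod_cast hM1) ?_
        exact_mod_cast hcount
      rwa [Real.log_mul (by positivity) (by
        have := hθ1 p0; positivity)] at h1
    have hsup := le_ciSup hbdd p0
    linarith
  · exact ciSup_le fun θ =>
      Real.log_le_log (by exact_mod_cast hθ1 θ) (by exact_mod_cast hθM θ)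
end
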